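/- Mechanism 2 is strongly group strategyproof: there do not exist a location profile x ∈ ℝⁿ, a nonempty set of agents S ⊆ {1,…,n}, and a misreport x'_S ∈ ℝ^{|S|} such that c(xᵢ, f₂(x'_S, x₋_S)) ≤ c(xᵢ, f₂(x)) for all i ∈ S and c(xⱼ, f₂(x'_S, x₋_S)) < c(xⱼ, f₂(x)) for some j ∈ S, where f₂ denotes Mechanism 2. -/
import Mathlib


open MeasureTheory

noncomputable section

/-- Shrink map: collapse interval [a,b] to the point a. -/
def shrink (a b t : ℝ) : ℝ :=
  if t ≤ a then t else if t ≤ b then a else t - (b - a)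

/-- Cost of an agent at ideal location `t` under range `(a,b)`. -/
def cost (t a b : ℝ) : ℝ := |shrink a b t - shrink a b 0|

/-- Social cost. -/
def SC (n : ℕ) (x : Fin n → ℝ) (a b : ℝ) : ℝ := ∑ i, cost (x i) a b

/-- Maximum cost. -/
def MC (n : ℕ) (x : Fin n → ℝ) (a b : ℝ) : ℝ :=
  sSup (Set.range fun i => cost (x i) a b)

/-- Optimal social cost over feasible ranges. -/
def OPTSC (n : ℕ) (d : ℝ) (x : Fin n → ℝ) : ℝ :=
  sInf {v : ℝ | ∃ a b : ℝ, a ≤ b ∧ b - a ≤ d ∧ v = SC n x a b}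

/-- Optimal maximum cost over feasible ranges. -/
def OPTMC (n : ℕ) (d : ℝ) (x : Fin n → ℝ) : ℝ :=
  sInf {v : ℝ | ∃ a b : ℝ, a ≤ b ∧ b - a ≤ d ∧ v = MC n x a b}

open Classical in
/-- The set D(x) used by Mechanism 1. -/
def Dset (n : ℕ) (d : ℝ) (x : Fin n → ℝ) : Set ℝ :=
  {y : ℝ | (Finset.univ.filter fun i => y + d ≤ x i).card ≤
           (Finset.univ.filter fun i => x i ≤ y).card}

/-- Mechanism 1. -/
def mech1 (n : ℕ) (d : ℝ) (x : Fin n → ℝ) : ℝ × ℝ :=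
  if 0 ≤ sInf (Dset n d x) then (0, d)
  else if sInf (Dset n d x) ≤ -d then (-d, 0)
  else (sInf (Dset n d x), sInf (Dset n d x) + d)

/-- Leftmost agent location. -/
def xleft (n : ℕ) (x : Fin n → ℝ) : ℝ := sInf (Set.range x)

/-- Rightmost agent location. -/
def xright (n : ℕ) (x : Fin n → ℝ) : ℝ := sSup (Set.range x)

/-- Mechanism 2. -/
def mech2 (n : ℕ) (d : ℝ) (x : Fin n → ℝ) : ℝ × ℝ :=
  if 0 ≤ xleft n x then (0, d)
  else if xleft n x ≤ -d then (-d, 0)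
  else (xleft n x, xleft n x + d)

/-- Mechanism 3. -/
def mech3 (n : ℕ) (d : ℝ) (x : Fin n → ℝ) : ℝ × ℝ :=
  (min (xleft n x) 0, min (xleft n x) 0 + d)

/-- The profile where agents in `S` report `x'` and all others report `x`. -/
def misreport (n : ℕ) (S : Finset (Fin n)) (x x' : Fin n → ℝ) : Fin n → ℝ :=
  fun j => if j ∈ S then x' j else x j

lemma shrink_zero (a b : ℝ) (ha : a ≤ 0) (hb : 0 ≤ b) : shrink a b 0 = a := by
  unfold shrink
  split_ifs with h1 h2 <;> first | rfl | linarith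

lemma cost_eq (t a b : ℝ) (ha : a ≤ 0) (hb : 0 ≤ b) :
    cost t a b = max 0 (max (a - t) (t - b)) := by
  unfold cost
  rw [shrink_zero a b ha hb]
  unfold shrink
  split_ifs with h1 h2
  · rw [abs_of_nonpos (by linarith), max_eq_left (show t - b ≤ a - t by linarith),
      max_eq_right (show (0:ℝ) ≤ a - t by linarith)]
    ring
  · push_neg at h1
    rw [sub_self, abs_zero, eq_comm, max_eq_left]
    exact max_le (by linarith) (by linarith)
  · push_neg at h1 h2
    rw [show t - (b - a) - a = t - b by ring, abs_of_nonneg (by linarith),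
      max_eq_right (show a - t ≤ t - b by linarith),
      max_eq_right (show (0:ℝ) ≤ t - b by linarith)]

lemma mech2_eq (n : ℕ) (d : ℝ) (hd : 0 < d) (x : Fin n → ℝ) :
    mech2 n d x = (max (-d) (min 0 (xleft n x)), max (-d) (min 0 (xleft n x)) + d) := by
  unfold mech2
  split_ifs with h1 h2
  · rw [min_eq_left h1, max_eq_right (by linarith)]
    norm_num
  · rw [min_eq_right (by linarith), max_eq_left h2]
    norm_num
  · push_neg at h1 h2
    rw [min_eq_right h1.le, max_eq_right h2.le]

theorem stmt5 (n : ℕ) (hn : 1 ≤ n) (d : ℝ) (hd : 0 < d) :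
    ¬ ∃ (x : Fin n → ℝ) (S : Finset (Fin n)) (x' : Fin n → ℝ), S.Nonempty ∧
      (∀ i ∈ S,
        cost (x i) (mech2 n d (misreport n S x x')).1 (mech2 n d (misreport n S x x')).2 ≤
          cost (x i) (mech2 n d x).1 (mech2 n d x).2) ∧
      (∃ j ∈ S,
        cost (x j) (mech2 n d (misreport n S x x')).1 (mech2 n d (misreport n S x x')).2 <
          cost (x j) (mech2 n d x).1 (mech2 n d x).2) := by
  rintro ⟨x, S, x', hS, hle, j, hjS, hlt⟩
  have hne : Nonempty (Fin n) := ⟨⟨0, hn⟩⟩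
  set y := misreport n S x x' with hy
  have hbdd : ∀ z : Fin n → ℝ, ∀ i, xleft n z ≤ z i := fun z i =>
    csInf_le (Set.finite_range z).bddBelow ⟨i, rfl⟩
  have hmem : ∀ z : Fin n → ℝ, ∃ i, xleft n z = z i := by
    intro z
    obtain ⟨i, hi⟩ := (Set.range_nonempty z).csInf_mem (Set.finite_range z)
    exact ⟨i, hi.symm⟩
  rw [mech2_eq n d hd x, mech2_eq n d hd y] at hle hlt
  dsimp only at hle hlt
  set v := xleft n x with hv
  set v' := xleft n y with hv'
  set m := max (-d) (min 0 v) with hm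
  set m' := max (-d) (min 0 v') with hm'
  have hm0 : m ≤ 0 := max_le (by linarith) (min_le_left _ _)
  have hmd : -d ≤ m := le_max_left _ _
  have hm'0 : m' ≤ 0 := max_le (by linarith) (min_le_left _ _)
  have hm'd : -d ≤ m' := le_max_left _ _
  rcases lt_trichotomy m' m with hcase | hcase | hcase
  · -- m' < m : then m > -d, so m = min 0 v ≤ v ≤ x j, so no strict gain for j
    have h2 : -d < min 0 v := by
      by_contra h
      push_neg at h
      have : m = -d := by rw [hm, max_eq_left h]
      linarith
    have hmv : m = min 0 v := by rw [hm, max_eq_right h2.le]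
    have hxj : m ≤ x j := hmv ▸ le_trans (min_le_right 0 v) (hbdd x j)
    rw [cost_eq (x j) m' (m' + d) hm'0 (by linarith),
        cost_eq (x j) m (m + d) hm0 (by linarith)] at hlt
    have hmono : max 0 (max (m - x j) (x j - (m + d))) ≤
        max 0 (max (m' - x j) (x j - (m' + d))) := by
      apply max_le (le_max_left _ _)
      apply max_le
      · exact le_trans (by linarith : m - x j ≤ 0) (le_max_left _ _)
      · exact le_trans (le_trans (by linarith : x j - (m + d) ≤ x j - (m' + d))
          (le_max_right (m' - x j) _)) (le_max_right 0 _)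
    linarith
  · rw [hcase] at hlt
    exact lt_irrefl _ hlt
  · -- m < m' : the leftmost agent must be in S and strictly loses
    have hvm : v ≤ m := by
      have hv0 : v < 0 := by
        by_contra h
        push_neg at h
        have : m = 0 := by rw [hm, min_eq_left h, max_eq_right (by linarith)]
        linarith
      rw [hm, min_eq_right hv0.le]
      exact le_max_right _ _
    have hvv' : v < v' := by
      by_contra h
      push_neg at h
      have : m' ≤ m := by
        rw [hm, hm']
        exact max_le_max le_rfl (min_le_min le_rfl h)
      linarith
    obtain ⟨i0, hi0⟩ := hmem x
    have hi0S : i0 ∈ S := by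
      by_contra h
      have hyi : y i0 = x i0 := by simp [hy, misreport, h]
      have hle' : v' ≤ x i0 := hyi ▸ hbdd y i0
      rw [← hi0] at hle'
      linarith
    have hkey := hle i0 hi0S
    rw [cost_eq (x i0) m' (m' + d) hm'0 (by linarith),
        cost_eq (x i0) m (m + d) hm0 (by linarith), ← hi0] at hkey
    have h1 : max 0 (max (m - v) (v - (m + d))) = m - v := by
      rw [max_eq_left (by linarith : v - (m + d) ≤ m - v),
          max_eq_right (by linarith : (0:ℝ) ≤ m - v)]
    have h2 : m' - v ≤ max 0 (max (m' - v) (v - (m' + d))) :=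
      le_trans (le_max_left _ _) (le_max_right _ _)
    linarith
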